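/- The function c(n) = (n² − 1)(n⁴ + n² + 15)/420 satisfies, for all integers n ≥ 2: c(2n+1) = (n³(n+2)/(2n+1))·(3c(n) + c(n+2)) − ((n−1)(n+1)³/(2n+1))·(c(n−1) + 3c(n+1)), and for all n ≥ 3: c(2n) = ((n−1)²(n+2)/4)·(2c(n−1) + c(n) + c(n+2) − c(2)) − ((n−2)(n+1)²/4)·(c(n−2) + c(n) + 2c(n+1) − c(2)). -/
import Mathlib


noncomputable def c : ℕ → ℚ := fun n => ((n : ℚ) ^ 2 - 1) * ((n : ℚ) ^ 4 + (n : ℚ) ^ 2 + 15) / 420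

theorem stmt15 :
    (∀ n : ℕ, 2 ≤ n →
      c (2 * n + 1) = ((n : ℚ) ^ 3 * (n + 2) / (2 * n + 1)) * (3 * c n + c (n + 2))
        - (((n : ℚ) - 1) * ((n : ℚ) + 1) ^ 3 / (2 * n + 1)) * (c (n - 1) + 3 * c (n + 1))) ∧
    (∀ n : ℕ, 3 ≤ n →
      c (2 * n) = (((n : ℚ) - 1) ^ 2 * ((n : ℚ) + 2) / 4) * (2 * c (n - 1) + c n + c (n + 2) - c 2)
        - (((n : ℚ) - 2) * ((n : ℚ) + 1) ^ 2 / 4) * (c (n - 2) + c n + 2 * c (n + 1) - c 2)) := by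
  constructor
  · intro n hn
    obtain ⟨m, rfl⟩ := Nat.exists_eq_add_of_le hn
    have h : ((2:ℚ) * (2 + m) + 1) ≠ 0 := by positivity
    simp only [c, show 2 + m - 1 = 1 + m by omega]
    push_cast
    field_simp
    ring
  · intro n hn
    obtain ⟨m, rfl⟩ := Nat.exists_eq_add_of_le hn
    simp only [c, show 3 + m - 1 = 2 + m by omega, show 3 + m - 2 = 1 + m by omega]
    push_cast
    field_simp
    ring
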